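/- Let p ∈ ℝ^M and let S be a finite nonempty set of points in ℝ^M. The minimum Manhattan distance needed to move p to a single point that weakly dominates every point of S equals Σ_m max(0, p m − min_{q ∈ S} q m), and this infimum is attained at the point whose m-th coordinate is min(p m, min_{q ∈ S} q m). -/

import Mathlib

/-- Point `p` weakly dominates point `q`: `p m ≤ q m` for every coordinate. -/
def WDom {M : ℕ} (p q : Fin M → ℝ) : Prop := ∀ m, p m ≤ q m

/-- Set `P` weakly dominates set `Q`. -/
def SetWDom {M : ℕ} (P Q : Finset (Fin M → ℝ)) : Prop :=
  ∀ q ∈ Q, ∃ p ∈ P, WDom p q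

/-- Manhattan distance. -/
noncomputable def mdist {M : ℕ} (p p' : Fin M → ℝ) : ℝ := ∑ m, |p m - p' m|

/-- Dominance move: infimum of total Manhattan move of a family `(f p)_{p ∈ P}`
whose image set weakly dominates `Q`. -/
noncomputable def DoM {M : ℕ} (P Q : Finset (Fin M → ℝ)) : ℝ :=
  sInf { c : ℝ | ∃ f : (Fin M → ℝ) → (Fin M → ℝ),
    (∀ q ∈ Q, ∃ p ∈ P, WDom (f p) q) ∧ c = ∑ p ∈ P, mdist p (f p) }

theorem single_point_min_move_set {M : ℕ} (p : Fin M → ℝ)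
    (S : Finset (Fin M → ℝ)) (hS : S.Nonempty) :
    sInf { c : ℝ | ∃ p' : Fin M → ℝ, (∀ q ∈ S, WDom p' q) ∧ c = mdist p p' }
        = ∑ m, max 0 (p m - S.inf' hS fun q => q m) ∧
    (∀ q ∈ S, WDom (fun m => min (p m) (S.inf' hS fun q => q m)) q) ∧
    mdist p (fun m => min (p m) (S.inf' hS fun q => q m))
        = ∑ m, max 0 (p m - S.inf' hS fun q => q m) := by
  set g : Fin M → ℝ := fun m => S.inf' hS fun q => q m with hg
  have hdom : ∀ q ∈ S, WDom (fun m => min (p m) (g m)) q := by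
    intro q hq m
    exact le_trans (min_le_right _ _) (Finset.inf'_le _ hq)
  have hdist : mdist p (fun m => min (p m) (g m)) = ∑ m, max 0 (p m - g m) := by
    unfold mdist
    apply Finset.sum_congr rfl
    intro m _
    show |p m - min (p m) (g m)| = _
    rcases le_or_gt (p m) (g m) with h | h
    · rw [min_eq_left h, sub_self, abs_zero, max_eq_left (by linarith)]
    · rw [min_eq_right h.le, abs_of_nonneg (by linarith), max_eq_right (by linarith)]
  refine ⟨?_, hdom, hdist⟩
  apply le_antisymm
  · apply csInf_le
    · refine ⟨0, ?_⟩
      rintro c ⟨p', hp', rfl⟩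
      exact Finset.sum_nonneg fun m _ => abs_nonneg _
    · exact ⟨_, hdom, hdist.symm⟩
  · refine le_csInf ⟨mdist p (fun m => min (p m) (g m)), ⟨_, hdom, rfl⟩⟩ ?_
    rintro c ⟨p', hp', rfl⟩
    unfold mdist
    apply Finset.sum_le_sum
    intro m _
    have hle : p' m ≤ g m := by
      obtain ⟨q, hq, hq2⟩ := Finset.exists_mem_eq_inf' hS (fun q => q m)
      rw [hg]
      dsimp only
      rw [hq2]
      exact hp' q hq m
    rcases le_or_gt (p m) (g m) with h | h
    · rw [max_eq_left (by linarith : p m - g m ≤ 0)]; exact abs_nonneg _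
    · calc max 0 (p m - g m) = p m - g m := max_eq_right (by linarith)
        _ ≤ p m - p' m := by linarith
        _ ≤ |p m - p' m| := le_abs_self _
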